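/- Let K be a field of characteristic 2, t ≥ 4 an odd natural number, and b, c ∈ K nonzero with b^{t−3} = c^{t−3}. Then the map α ↦ b^{−1}cα, β ↦ b^{−1}cβ, γ ↦ b^{−1}cγ, η ↦ b^{−1}cη induces a K-algebra isomorphism Q(2B)_3^t(b) → Q(2B)_3^t(c). -/

import Mathlib

/- The algebra Q(2B)_3^t(a,b): quiver with vertices 1,2, loop α at 1, loop η
   at 2, arrows β : 1 → 2, γ : 2 → 1, with relations
   αβ = βη, ηγ = γα, α² = βγ + bα³, γβ = aη^{t−1}, α⁴ = 0, η^{t+1} = 0,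
   γα² = 0, α²β = 0.  Q(2B)_3^t(b) := Q(2B)_3^t(1,b). -/

namespace SocleWSA9

variable (K : Type) [Field K]

/-- Generators: 0 = e₁, 1 = e₂, 2 = α, 3 = β, 4 = γ, 5 = η. -/
noncomputable def e1 : FreeAlgebra K (Fin 6) := FreeAlgebra.ι K 0
noncomputable def e2 : FreeAlgebra K (Fin 6) := FreeAlgebra.ι K 1
noncomputable def al : FreeAlgebra K (Fin 6) := FreeAlgebra.ι K 2
noncomputable def be : FreeAlgebra K (Fin 6) := FreeAlgebra.ι K 3
noncomputable def ga : FreeAlgebra K (Fin 6) := FreeAlgebra.ι K 4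
noncomputable def et : FreeAlgebra K (Fin 6) := FreeAlgebra.ι K 5

inductive QBRel (t : ℕ) (a b : K) : FreeAlgebra K (Fin 6) → FreeAlgebra K (Fin 6) → Prop
  | unit : QBRel t a b (e1 K + e2 K) 1
  | idem1 : QBRel t a b (e1 K * e1 K) (e1 K)
  | idem2 : QBRel t a b (e2 K * e2 K) (e2 K)
  | orth12 : QBRel t a b (e1 K * e2 K) 0
  | orth21 : QBRel t a b (e2 K * e1 K) 0
  | sal : QBRel t a b (e1 K * al K) (al K)
  | tal : QBRel t a b (al K * e1 K) (al K)
  | sbe : QBRel t a b (e1 K * be K) (be K)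
  | tbe : QBRel t a b (be K * e2 K) (be K)
  | sga : QBRel t a b (e2 K * ga K) (ga K)
  | tga : QBRel t a b (ga K * e1 K) (ga K)
  | set : QBRel t a b (e2 K * et K) (et K)
  | tet : QBRel t a b (et K * e2 K) (et K)
  | r1 : QBRel t a b (al K * be K) (be K * et K)
  | r2 : QBRel t a b (et K * ga K) (ga K * al K)
  | r3 : QBRel t a b (al K * al K) (be K * ga K + b • al K ^ 3)
  | r4 : QBRel t a b (ga K * be K) (a • et K ^ (t - 1))
  | r5 : QBRel t a b (al K ^ 4) 0
  | r6 : QBRel t a b (et K ^ (t + 1)) 0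
  | r7 : QBRel t a b (ga K * (al K * al K)) 0
  | r8 : QBRel t a b (al K * al K * be K) 0

/-- The canonical projection onto `Q(2B)_3^t(a,b)`. -/
noncomputable def pi (t : ℕ) (a b : K) :
    FreeAlgebra K (Fin 6) →ₐ[K] RingQuot (QBRel K t a b) :=
  RingQuot.mkAlgHom K (QBRel K t a b)

end SocleWSA9

namespace SocleWSA9Aux
open SocleWSA9

variable (K : Type) [Field K]

/-- The scaling homomorphism into the quotient by `QBRel K t 1 e`. -/
noncomputable def Fmap (t : ℕ) (e l : K) :
    FreeAlgebra K (Fin 6) →ₐ[K] RingQuot (QBRel K t 1 e) :=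
  FreeAlgebra.lift K
    ![pi K t 1 e (e1 K), pi K t 1 e (e2 K), l • pi K t 1 e (al K),
      l • pi K t 1 e (be K), l • pi K t 1 e (ga K), l • pi K t 1 e (et K)]

lemma Fmap_e1 (t : ℕ) (e l : K) : Fmap K t e l (e1 K) = pi K t 1 e (e1 K) := by
  rw [e1, Fmap, FreeAlgebra.lift_ι_apply]; rfl

lemma Fmap_e2 (t : ℕ) (e l : K) : Fmap K t e l (e2 K) = pi K t 1 e (e2 K) := by
  rw [e2, Fmap, FreeAlgebra.lift_ι_apply]; rfl

lemma Fmap_al (t : ℕ) (e l : K) : Fmap K t e l (al K) = l • pi K t 1 e (al K) := by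
  rw [al, Fmap, FreeAlgebra.lift_ι_apply]; rfl

lemma Fmap_be (t : ℕ) (e l : K) : Fmap K t e l (be K) = l • pi K t 1 e (be K) := by
  rw [be, Fmap, FreeAlgebra.lift_ι_apply]; rfl

lemma Fmap_ga (t : ℕ) (e l : K) : Fmap K t e l (ga K) = l • pi K t 1 e (ga K) := by
  rw [ga, Fmap, FreeAlgebra.lift_ι_apply]; rfl

lemma Fmap_et (t : ℕ) (e l : K) : Fmap K t e l (et K) = l • pi K t 1 e (et K) := by
  rw [et, Fmap, FreeAlgebra.lift_ι_apply]; rfl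

lemma Fmap_rel (t : ℕ) (d e l : K) (h1 : d * l ^ 3 = e * l ^ 2)
    (h2 : l ^ (t - 1) = l ^ 2) :
    ∀ ⦃x y⦄, QBRel K t 1 d x y → Fmap K t e l x = Fmap K t e l y := by
  have rel : ∀ {x y}, QBRel K t 1 e x y → pi K t 1 e x = pi K t 1 e y :=
    fun h => RingQuot.mkAlgHom_rel K h
  intro x y h
  induction h with
  | unit =>
      have := rel (QBRel.unit)
      simpa [map_add, map_one, Fmap_e1, Fmap_e2] using this
  | idem1 =>
      have := rel (QBRel.idem1)
      simpa [map_mul, Fmap_e1] using this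
  | idem2 =>
      have := rel (QBRel.idem2)
      simpa [map_mul, Fmap_e2] using this
  | orth12 =>
      have := rel (QBRel.orth12)
      simpa [map_mul, map_zero, Fmap_e1, Fmap_e2] using this
  | orth21 =>
      have := rel (QBRel.orth21)
      simpa [map_mul, map_zero, Fmap_e1, Fmap_e2] using this
  | sal =>
      have := rel (QBRel.sal)
      simp only [map_mul, Fmap_e1, Fmap_al, mul_smul_comm]
      rw [← map_mul, this]
  | tal =>
      have := rel (QBRel.tal)
      simp only [map_mul, Fmap_e1, Fmap_al, smul_mul_assoc]
      rw [← map_mul, this]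
  | sbe =>
      have := rel (QBRel.sbe)
      simp only [map_mul, Fmap_e1, Fmap_be, mul_smul_comm]
      rw [← map_mul, this]
  | tbe =>
      have := rel (QBRel.tbe)
      simp only [map_mul, Fmap_e2, Fmap_be, smul_mul_assoc]
      rw [← map_mul, this]
  | sga =>
      have := rel (QBRel.sga)
      simp only [map_mul, Fmap_e2, Fmap_ga, mul_smul_comm]
      rw [← map_mul, this]
  | tga =>
      have := rel (QBRel.tga)
      simp only [map_mul, Fmap_e1, Fmap_ga, smul_mul_assoc]
      rw [← map_mul, this]
  | set =>
      have := rel (QBRel.set)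
      simp only [map_mul, Fmap_e2, Fmap_et, mul_smul_comm]
      rw [← map_mul, this]
  | tet =>
      have := rel (QBRel.tet)
      simp only [map_mul, Fmap_e2, Fmap_et, smul_mul_assoc]
      rw [← map_mul, this]
  | r1 =>
      have := rel (QBRel.r1)
      simp only [map_mul, Fmap_al, Fmap_be, Fmap_et, smul_mul_smul_comm]
      rw [← map_mul, ← map_mul, this]
  | r2 =>
      have := rel (QBRel.r2)
      simp only [map_mul, Fmap_et, Fmap_ga, Fmap_al, smul_mul_smul_comm]
      rw [← map_mul, ← map_mul, this]
  | r3 =>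
      have hrel := rel (QBRel.r3)
      simp only [map_mul, map_add, map_smul, map_pow] at hrel
      simp only [map_mul, map_add, map_smul, map_pow, Fmap_al, Fmap_be, Fmap_ga,
        smul_mul_smul_comm, smul_pow]
      rw [hrel, smul_add, smul_smul, smul_smul]
      congr 1
      congr 1
      linear_combination -h1
  | r4 =>
      have hrel := rel (QBRel.r4)
      simp only [map_mul, map_smul, map_pow, one_smul] at hrel
      simp only [map_mul, map_smul, map_pow, one_smul, Fmap_ga, Fmap_be, Fmap_et,
        smul_mul_smul_comm, smul_pow]
      rw [hrel, h2, pow_two]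
  | r5 =>
      have := rel (QBRel.r5)
      simp only [map_pow, map_zero] at this
      simp only [map_pow, map_zero, Fmap_al, smul_pow, this, smul_zero]
  | r6 =>
      have := rel (QBRel.r6)
      simp only [map_pow, map_zero] at this
      simp only [map_pow, map_zero, Fmap_et, smul_pow, this, smul_zero]
  | r7 =>
      have := rel (QBRel.r7)
      simp only [map_mul, map_zero] at this
      simp only [map_mul, map_zero, Fmap_ga, Fmap_al, smul_mul_smul_comm, mul_smul_comm,
        smul_mul_assoc, this, smul_zero]
  | r8 =>
      have := rel (QBRel.r8)
      simp only [map_mul, map_zero] at this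
      simp only [map_mul, map_zero, Fmap_al, Fmap_be, smul_mul_smul_comm, mul_smul_comm,
        smul_mul_assoc, this, smul_zero]

end SocleWSA9Aux

open SocleWSA9Aux

open SocleWSA9 in
/-- Let `K` be a field of characteristic 2, `t ≥ 4` odd,
`b, c ∈ K` nonzero with `b^{t−3} = c^{t−3}`.  Then `α ↦ b⁻¹cα`, `β ↦ b⁻¹cβ`,
`γ ↦ b⁻¹cγ`, `η ↦ b⁻¹cη` induces a `K`-algebra isomorphism
`Q(2B)_3^t(b) → Q(2B)_3^t(c)`. -/
theorem socle_wsa_stmt9 (K : Type) [Field K] (hchar : CharP K 2)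
    (t : ℕ) (ht : 4 ≤ t) (hodd : Odd t) (b c : K) (hb : b ≠ 0) (hc : c ≠ 0)
    (hbc : b ^ (t - 3) = c ^ (t - 3)) :
    ∃ h : RingQuot (QBRel K t 1 b) ≃ₐ[K] RingQuot (QBRel K t 1 c),
      h (pi K t 1 b (al K)) = (b⁻¹ * c) • pi K t 1 c (al K) ∧
      h (pi K t 1 b (be K)) = (b⁻¹ * c) • pi K t 1 c (be K) ∧
      h (pi K t 1 b (ga K)) = (b⁻¹ * c) • pi K t 1 c (ga K) ∧
      h (pi K t 1 b (et K)) = (b⁻¹ * c) • pi K t 1 c (et K) := by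
  set l : K := b⁻¹ * c with hl
  set m : K := c⁻¹ * b with hm
  have hml : m * l = 1 := by rw [hm, hl]; field_simp
  have hlm : l * m = 1 := by rw [hl, hm]; field_simp
  have hlpow : l ^ (t - 3) = 1 := by
    rw [hl, mul_pow, inv_pow, hbc, inv_mul_cancel₀ (pow_ne_zero _ hc)]
  have hmpow : m ^ (t - 3) = 1 := by
    rw [hm, mul_pow, inv_pow, ← hbc, inv_mul_cancel₀ (pow_ne_zero _ hb)]
  have hsplit : t - 1 = (t - 3) + 2 := by omega
  have hl2 : l ^ (t - 1) = l ^ 2 := by rw [hsplit, pow_add, hlpow, one_mul]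
  have hm2 : m ^ (t - 1) = m ^ 2 := by rw [hsplit, pow_add, hmpow, one_mul]
  have hl1 : b * l ^ 3 = c * l ^ 2 := by rw [hl]; field_simp
  have hm1 : c * m ^ 3 = b * m ^ 2 := by rw [hm]; field_simp
  let Ffwd : RingQuot (QBRel K t 1 b) →ₐ[K] RingQuot (QBRel K t 1 c) :=
    RingQuot.liftAlgHom K ⟨Fmap K t c l, Fmap_rel K t b c l hl1 hl2⟩
  let Fback : RingQuot (QBRel K t 1 c) →ₐ[K] RingQuot (QBRel K t 1 b) :=
    RingQuot.liftAlgHom K ⟨Fmap K t b m, Fmap_rel K t c b m hm1 hm2⟩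
  have hFfwd : ∀ x, Ffwd (pi K t 1 b x) = Fmap K t c l x := fun x =>
    RingQuot.liftAlgHom_mkAlgHom_apply K _ _ x
  have hFback : ∀ x, Fback (pi K t 1 c x) = Fmap K t b m x := fun x =>
    RingQuot.liftAlgHom_mkAlgHom_apply K _ _ x
  have comp1 : Ffwd.comp Fback = AlgHom.id K _ := by
    apply RingQuot.ringQuot_ext' K
    apply FreeAlgebra.hom_ext
    funext i
    show Ffwd (Fback (pi K t 1 c (FreeAlgebra.ι K i))) = pi K t 1 c (FreeAlgebra.ι K i)
    fin_cases i
    · show Ffwd (Fback (pi K t 1 c (e1 K))) = pi K t 1 c (e1 K)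
      rw [hFback, Fmap_e1, hFfwd, Fmap_e1]
    · show Ffwd (Fback (pi K t 1 c (e2 K))) = pi K t 1 c (e2 K)
      rw [hFback, Fmap_e2, hFfwd, Fmap_e2]
    · show Ffwd (Fback (pi K t 1 c (al K))) = pi K t 1 c (al K)
      rw [hFback, Fmap_al, map_smul, hFfwd, Fmap_al, smul_smul, hml, one_smul]
    · show Ffwd (Fback (pi K t 1 c (be K))) = pi K t 1 c (be K)
      rw [hFback, Fmap_be, map_smul, hFfwd, Fmap_be, smul_smul, hml, one_smul]
    · show Ffwd (Fback (pi K t 1 c (ga K))) = pi K t 1 c (ga K)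
      rw [hFback, Fmap_ga, map_smul, hFfwd, Fmap_ga, smul_smul, hml, one_smul]
    · show Ffwd (Fback (pi K t 1 c (et K))) = pi K t 1 c (et K)
      rw [hFback, Fmap_et, map_smul, hFfwd, Fmap_et, smul_smul, hml, one_smul]
  have comp2 : Fback.comp Ffwd = AlgHom.id K _ := by
    apply RingQuot.ringQuot_ext' K
    apply FreeAlgebra.hom_ext
    funext i
    show Fback (Ffwd (pi K t 1 b (FreeAlgebra.ι K i))) = pi K t 1 b (FreeAlgebra.ι K i)
    fin_cases i
    · show Fback (Ffwd (pi K t 1 b (e1 K))) = pi K t 1 b (e1 K)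
      rw [hFfwd, Fmap_e1, hFback, Fmap_e1]
    · show Fback (Ffwd (pi K t 1 b (e2 K))) = pi K t 1 b (e2 K)
      rw [hFfwd, Fmap_e2, hFback, Fmap_e2]
    · show Fback (Ffwd (pi K t 1 b (al K))) = pi K t 1 b (al K)
      rw [hFfwd, Fmap_al, map_smul, hFback, Fmap_al, smul_smul, hlm, one_smul]
    · show Fback (Ffwd (pi K t 1 b (be K))) = pi K t 1 b (be K)
      rw [hFfwd, Fmap_be, map_smul, hFback, Fmap_be, smul_smul, hlm, one_smul]
    · show Fback (Ffwd (pi K t 1 b (ga K))) = pi K t 1 b (ga K)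
      rw [hFfwd, Fmap_ga, map_smul, hFback, Fmap_ga, smul_smul, hlm, one_smul]
    · show Fback (Ffwd (pi K t 1 b (et K))) = pi K t 1 b (et K)
      rw [hFfwd, Fmap_et, map_smul, hFback, Fmap_et, smul_smul, hlm, one_smul]
  refine ⟨AlgEquiv.ofAlgHom Ffwd Fback comp1 comp2, ?_, ?_, ?_, ?_⟩
  · show Ffwd (pi K t 1 b (al K)) = l • pi K t 1 c (al K); rw [hFfwd, Fmap_al]
  · show Ffwd (pi K t 1 b (be K)) = l • pi K t 1 c (be K); rw [hFfwd, Fmap_be]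
  · show Ffwd (pi K t 1 b (ga K)) = l • pi K t 1 c (ga K); rw [hFfwd, Fmap_ga]
  · show Ffwd (pi K t 1 b (et K)) = l • pi K t 1 c (et K); rw [hFfwd, Fmap_et]
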